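/- Let q = 2^h, Tr the absolute trace of GF(q). Let α,β,λ and α',β',λ' ∈ GF(q) with λ ≠ λ', λ,λ' ≠ 0, Tr(αβ) = Tr(α'β') = 1. Define α⊕α' = (αλ + α'λ')/(λ+λ'), β⊕β' = (βλ + β'λ')/(λ+λ'), λ⊕λ' = λ+λ'. If Tr((α⊕α')(β⊕β')) = 1, then the conics {αx²+xy+βy²+λz²=0} and {α'x²+xy+β'y²+λ'z²=0} in PG(2,q) are disjoint. -/

import Mathlib

open Algebra

/-- Frobenius `x ↦ x ^ 2` as a `ZMod 2`-algebra automorphism of a finite field of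
characteristic two. -/
noncomputable def frobAlg2 (L : Type*) [Field L] [Finite L] [Algebra (ZMod 2) L] [CharP L 2] :
    L ≃ₐ[ZMod 2] L :=
  { frobeniusEquiv L 2 with
    commutes' := fun c => by
      show (algebraMap (ZMod 2) L c) ^ 2 = algebraMap (ZMod 2) L c
      rw [← map_pow]
      congr 1
      exact (ZMod.pow_card c) }

theorem trace_sq2 (L : Type*) [Field L] [Finite L] [Algebra (ZMod 2) L] [CharP L 2] (x : L) :
    Algebra.trace (ZMod 2) L (x ^ 2) = Algebra.trace (ZMod 2) L x := by
  have hinj : Function.Injective (algebraMap (ZMod 2) L) := (algebraMap (ZMod 2) L).injective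
  apply hinj
  rw [trace_eq_sum_automorphisms, trace_eq_sum_automorphisms]
  rw [← Fintype.sum_equiv (Equiv.mulLeft (frobAlg2 L)) _ (fun σ => σ x)]
  intro σ
  show σ (x ^ 2) = ((frobAlg2 L) * σ) x
  show σ (x ^ 2) = (frobAlg2 L) (σ x)
  rw [map_pow]
  rfl

theorem key_lemma (L : Type*) [Field L] [Finite L] [Algebra (ZMod 2) L] [CharP L 2]
    (a b t s : L) (heq : a * t ^ 2 + t * s + b * s ^ 2 = 0) (hts : ¬ (t = 0 ∧ s = 0)) :
    Algebra.trace (ZMod 2) L (a * b) = 0 := by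
  have h2 : (2 : L) = 0 := by exact_mod_cast CharP.cast_eq_zero L 2
  rcases eq_or_ne s 0 with hs | hs
  · subst hs
    have ht : t ≠ 0 := fun ht => hts ⟨ht, rfl⟩
    have ha : a = 0 := by
      have : a * t ^ 2 = 0 := by linear_combination heq
      rcases mul_eq_zero.mp this with h | h
      · exact h
      · exact absurd (pow_eq_zero_iff (n := 2) (by norm_num) |>.mp h) ht
    rw [ha, zero_mul, map_zero]
  · rcases eq_or_ne a 0 with ha | ha
    · rw [ha, zero_mul, map_zero]
    · have hab : a * b = (a * t / s) ^ 2 + (a * t / s) := by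
        field_simp
        linear_combination heq - (a * t ^ 2 + t * s) * h2
      rw [hab, map_add, trace_sq2]
      have : Algebra.trace (ZMod 2) L (a * t / s) + Algebra.trace (ZMod 2) L (a * t / s) = 0 := by
        have h2' : (2 : ZMod 2) = 0 := by decide
        linear_combination (Algebra.trace (ZMod 2) L (a * t / s)) * h2'
      exact this

/-- Mathon's disjointness lemma: if `Tr((α⊕α')(β⊕β')) = 1` then the conics
`F_{α,β,λ}` and `F_{α',β',λ'}` are disjoint in `PG(2, 2^h)`, i.e. no nonzero
vector `(x,y,z)` satisfies both equations. -/
theorem conics_disjoint_of_trace_composition (h : ℕ) (hh : 1 ≤ h)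
    (α β lam α' β' lam' : GaloisField 2 h)
    (hlam : lam ≠ 0) (hlam' : lam' ≠ 0) (hne : lam ≠ lam')
    (h1 : Algebra.trace (ZMod 2) (GaloisField 2 h) (α * β) = 1)
    (h2 : Algebra.trace (ZMod 2) (GaloisField 2 h) (α' * β') = 1)
    (h3 : Algebra.trace (ZMod 2) (GaloisField 2 h)
      (((α * lam + α' * lam') / (lam + lam')) *
        ((β * lam + β' * lam') / (lam + lam'))) = 1) :
    ∀ x y z : GaloisField 2 h, (x, y, z) ≠ (0, 0, 0) →
      ¬ (α * x ^ 2 + x * y + β * y ^ 2 + lam * z ^ 2 = 0 ∧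
         α' * x ^ 2 + x * y + β' * y ^ 2 + lam' * z ^ 2 = 0) := by
  have h2L : (2 : GaloisField 2 h) = 0 := by exact_mod_cast CharP.cast_eq_zero (GaloisField 2 h) 2
  have hsum : lam + lam' ≠ 0 := fun H => hne (by linear_combination H - lam' * h2L)
  intro x y z hxyz ⟨e1, e2⟩
  rcases eq_or_ne z 0 with hz | hz
  · subst hz
    have hxy : ¬ (x = 0 ∧ y = 0) := by
      rintro ⟨rfl, rfl⟩; exact hxyz rfl
    have e1' : α * x ^ 2 + x * y + β * y ^ 2 = 0 := by linear_combination e1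
    have := key_lemma (GaloisField 2 h) α β x y e1' hxy
    rw [this] at h1
    exact absurd h1 (by decide)
  · have hxy : ¬ (x = 0 ∧ y = 0) := by
      rintro ⟨rfl, rfl⟩
      apply hz
      have : lam * z ^ 2 = 0 := by linear_combination e1
      rcases mul_eq_zero.mp this with h' | h'
      · exact absurd h' hlam
      · exact pow_eq_zero_iff (n := 2) (by norm_num) |>.mp h'
    have e3 : (α * lam' + α' * lam) * x ^ 2 + (lam + lam') * (x * y)
        + (β * lam' + β' * lam) * y ^ 2 = 0 := by
      linear_combination lam' * e1 + lam * e2 - lam * lam' * z ^ 2 * h2L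
    set A₁ := (α * lam' + α' * lam) / (lam + lam') with hA₁
    set B₁ := (β * lam' + β' * lam) / (lam + lam') with hB₁
    have e4 : A₁ * x ^ 2 + x * y + B₁ * y ^ 2 = 0 := by
      rw [hA₁, hB₁]
      field_simp
      linear_combination e3
    have htr := key_lemma (GaloisField 2 h) A₁ B₁ x y e4 hxy
    have hAB : ((α * lam + α' * lam') / (lam + lam')) *
        ((β * lam + β' * lam') / (lam + lam')) = A₁ * B₁ + (α * β + α' * β') := by
      rw [hA₁, hB₁]
      field_simp
      linear_combination (-(α * β * lam' ^ 2) - α' * β' * lam ^ 2 - α * β * lam * lam'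
        - α' * β' * lam * lam') * h2L
    rw [hAB, map_add, map_add, htr, h1, h2] at h3
    exact absurd h3 (by decide)
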